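/- Let R be a commutative ring, E a finitely generated projective R-module of rank r, and t : E → R an R-linear map. The Koszul complex K(t) = (Λ^• E, contraction by t) has Euler characteristic Σ_n (−1)^n [Λ^n E] = e(E) in K₀(R); in particular if t is surjective the Koszul complex is exact. -/
import Mathlib


set_option maxHeartbeats 1000000
set_option synthInstance.maxHeartbeats 1000000

/-!
STATEMENT 5: Let `R` be a commutative ring, `E` a finitely generated projective `R`-module
of rank `r`, and `t : E → R` an `R`-linear map.  The Koszul complex `K(t) = (Λ^• E,
contraction by t)` has Euler characteristic `Σₙ (−1)ⁿ [Λⁿ E] = e(E)` in `K₀(R)`; in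
particular, if `t` is surjective the Koszul complex is exact (exactness in degree `0`
meaning that `d₀ : Λ¹E → Λ⁰E` is surjective).
-/

universe u

/-- An index type bundling all `R`-modules (in universe `u`). -/
structure ModIdx (R : Type u) [CommRing R] : Type (u + 1) where
  carrier : Type u
  [acg : AddCommGroup carrier]
  [mod : Module R carrier]

attribute [instance] ModIdx.acg ModIdx.mod

variable (R : Type u) [CommRing R]

/-- Relations defining `K₀(R)`: `[P] = [P'] + [P'']` whenever `P ≅ P' ⊕ P''`, for finitely
generated projective modules. -/
def K0Rel : AddSubgroup (FreeAbelianGroup (ModIdx R)) :=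
  AddSubgroup.closure
    {a | ∃ P P' P'' : ModIdx R,
      Module.Finite R P.carrier ∧ Module.Projective R P.carrier ∧
      Module.Finite R P'.carrier ∧ Module.Projective R P'.carrier ∧
      Module.Finite R P''.carrier ∧ Module.Projective R P''.carrier ∧
      Nonempty (P.carrier ≃ₗ[R] P'.carrier × P''.carrier) ∧
      a = FreeAbelianGroup.of P - FreeAbelianGroup.of P' - FreeAbelianGroup.of P''}

/-- The Grothendieck group `K₀(R)` of finitely generated projective `R`-modules. -/
def K0 := FreeAbelianGroup (ModIdx R) ⧸ K0Rel R

instance : AddCommGroup (K0 R) := inferInstanceAs (AddCommGroup (_ ⧸ K0Rel R))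

/-- The class `[M] ∈ K₀(R)` of a module. -/
def K0.cls (M : Type u) [AddCommGroup M] [Module R M] : K0 R :=
  QuotientAddGroup.mk (FreeAbelianGroup.of ⟨M⟩)

/-- The wedge `v₀ ∧ ⋯ ∧ vₙ₋₁` as an element of the `n`-th exterior power. -/
noncomputable def wedge (E : Type u) [AddCommGroup E] [Module R E] (n : ℕ)
    (v : Fin n → E) : ⋀[R]^n E :=
  ⟨ExteriorAlgebra.ιMulti R n v, ExteriorAlgebra.ιMulti_range R n ⟨v, rfl⟩⟩

/-- `d` is the Koszul differential (contraction) associated to the cosection `t : E → R`: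
on wedges it is given by
`d (v₀ ∧ ⋯ ∧ vₙ) = Σᵢ (−1)ⁱ t(vᵢ) • v₀ ∧ ⋯ ∧ v̂ᵢ ∧ ⋯ ∧ vₙ`. -/
def IsKoszulDiff (E : Type u) [AddCommGroup E] [Module R E] (t : E →ₗ[R] R)
    (d : ∀ n : ℕ, (⋀[R]^(n + 1) E) →ₗ[R] (⋀[R]^n E)) : Prop :=
  ∀ (n : ℕ) (v : Fin (n + 1) → E),
    d n (wedge R E (n + 1) v) =
      ∑ i : Fin (n + 1),
        ((-1 : ℤ) ^ (i : ℕ)) • t (v i) • wedge R E n (fun j => v (i.succAbove j))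

/-- The Euler class of a finitely generated projective module of rank `≤ r`. -/
noncomputable def eulerClass (E : Type u) [AddCommGroup E] [Module R E] (r : ℕ) : K0 R :=
  ∑ n ∈ Finset.range (r + 1), ((-1 : ℤ) ^ n) • K0.cls R (⋀[R]^n E)

/-- Contraction on a wedge is given by the Koszul formula. -/
lemma contract_iMulti (E : Type u) [AddCommGroup E] [Module R E] (t : E →ₗ[R] R)
    (n : ℕ) : ∀ (v : Fin (n+1) → E),
    CliffordAlgebra.contractLeft (Q := (0 : QuadraticForm R E)) t
        (ExteriorAlgebra.ιMulti R (n+1) v) =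
      ∑ i : Fin (n+1), ((-1:ℤ)^(i:ℕ)) • t (v i) •
        ExteriorAlgebra.ιMulti R n (fun j => v (i.succAbove j)) := by
  induction n with
  | zero =>
    intro v
    rw [ExteriorAlgebra.ιMulti_succ_apply, CliffordAlgebra.contractLeft_ι_mul]
    simp [ExteriorAlgebra.ιMulti_zero_apply, CliffordAlgebra.contractLeft_one]
  | succ n ih =>
    intro v
    have h1 : ∀ i : Fin (n+1),
        ExteriorAlgebra.ι R (v 0) * ((-1:ℤ)^(i:ℕ) • t (Matrix.vecTail v i) •
          ExteriorAlgebra.ιMulti R n (fun j => Matrix.vecTail v (i.succAbove j))) =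
        -(((-1:ℤ)^((i.succ : Fin (n+2)) : ℕ)) • t (v i.succ) •
          ExteriorAlgebra.ιMulti R (n+1) (fun j => v (i.succ.succAbove j))) := by
      intro i
      rw [mul_smul_comm, mul_smul_comm, Fin.val_succ, pow_succ, mul_neg_one, neg_smul, neg_neg]
      have htail : Matrix.vecTail (fun j : Fin (n+1) => v (i.succ.succAbove j)) =
          (fun j : Fin n => Matrix.vecTail v (i.succAbove j)) := by
        funext j
        simp [Matrix.vecTail, Fin.succ_succAbove_succ]
      rw [ExteriorAlgebra.ιMulti_succ_apply (v := fun j => v (i.succ.succAbove j)), htail,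
        Fin.succ_succAbove_zero]
      rfl
    rw [ExteriorAlgebra.ιMulti_succ_apply, CliffordAlgebra.contractLeft_ι_mul, ih,
      Finset.mul_sum]
    simp_rw [h1]
    conv_rhs => rw [Fin.sum_univ_succ]
    rw [Finset.sum_neg_distrib, sub_neg_eq_add]
    congr 1
    have h2 : (fun j : Fin (n+1) => v ((0 : Fin (n+2)).succAbove j)) = Matrix.vecTail v := by
      funext j; simp [Fin.zero_succAbove, Matrix.vecTail]
    rw [h2]
    simp

/-- A Koszul differential is contraction. -/
lemma d_agree (E : Type u) [AddCommGroup E] [Module R E] (t : E →ₗ[R] R)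
    (d : ∀ n : ℕ, (⋀[R]^(n + 1) E) →ₗ[R] (⋀[R]^n E)) (hd : IsKoszulDiff R E t d)
    (n : ℕ) (x : ⋀[R]^(n+1) E) :
    ((d n x : ⋀[R]^n E) : ExteriorAlgebra R E) =
      CliffordAlgebra.contractLeft (Q := (0 : QuadraticForm R E)) t (x : ExteriorAlgebra R E) := by
  obtain ⟨y, hy⟩ := x
  have hy' : y ∈ Submodule.span R (Set.range (ExteriorAlgebra.ιMulti R (n+1) (M := E))) := by
    rw [ExteriorAlgebra.ιMulti_span_fixedDegree]; exact hy
  induction hy' using Submodule.span_induction with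
  | mem z hz =>
    obtain ⟨v, rfl⟩ := hz
    have : (⟨ExteriorAlgebra.ιMulti R (n+1) v, hy⟩ : ⋀[R]^(n+1) E) = wedge R E (n+1) v := rfl
    rw [this, hd n v,
      show ((wedge R E (n+1) v : ⋀[R]^(n+1) E) : ExteriorAlgebra R E) =
        ExteriorAlgebra.ιMulti R (n+1) v from rfl, contract_iMulti]
    rw [Submodule.coe_sum]
    rfl
  | zero =>
    have : (⟨(0 : ExteriorAlgebra R E), hy⟩ : ⋀[R]^(n+1) E) = 0 := rfl
    rw [this, map_zero]
    simp
  | add z w hz hw ihz ihw =>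
    have hz' : z ∈ ⋀[R]^(n+1) E := by
      rw [← ExteriorAlgebra.ιMulti_span_fixedDegree]; exact hz
    have hw' : w ∈ ⋀[R]^(n+1) E := by
      rw [← ExteriorAlgebra.ιMulti_span_fixedDegree]; exact hw
    have : (⟨z + w, hy⟩ : ⋀[R]^(n+1) E) = ⟨z, hz'⟩ + ⟨w, hw'⟩ := rfl
    rw [this, map_add, Submodule.coe_add, ihz hz', ihw hw', Submodule.coe_add, map_add]
  | smul a z hz ihz =>
    have hz' : z ∈ ⋀[R]^(n+1) E := by
      rw [← ExteriorAlgebra.ιMulti_span_fixedDegree]; exact hz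
    have : (⟨a • z, hy⟩ : ⋀[R]^(n+1) E) = a • ⟨z, hz'⟩ := rfl
    rw [this, map_smul, Submodule.coe_smul, ihz hz', Submodule.coe_smul, map_smul]

theorem koszul_eulerChar_and_exactness
    (E : Type u) [AddCommGroup E] [Module R E]
    [Module.Finite R E] [Module.Projective R E]
    (r : ℕ) (hr : ∀ n, r < n → Subsingleton (⋀[R]^n E))
    (t : E →ₗ[R] R)
    (d : ∀ n : ℕ, (⋀[R]^(n + 1) E) →ₗ[R] (⋀[R]^n E))
    (hd : IsKoszulDiff R E t d) :
    (∑ n ∈ Finset.range (r + 1), ((-1 : ℤ) ^ n) • K0.cls R (⋀[R]^n E)) =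
      eulerClass R E r ∧
    (Function.Surjective t →
      Function.Surjective (d 0) ∧
        ∀ n : ℕ, LinearMap.range (d (n + 1)) = LinearMap.ker (d n)) := by
  refine ⟨rfl, fun ht => ?_⟩
  obtain ⟨e, he⟩ := ht 1
  constructor
  · -- surjectivity of d 0
    intro x
    obtain ⟨y, hy⟩ := x
    have hy0 : y ∈ (1 : Submodule R (ExteriorAlgebra R E)) := by
      simpa [pow_zero] using hy
    obtain ⟨c, hc⟩ := Submodule.mem_one.mp hy0
    have hmem : ExteriorAlgebra.ι R (c • e) ∈ ⋀[R]^1 E := by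
      have h1 : (⋀[R]^1 E) = LinearMap.range (ExteriorAlgebra.ι R (M := E)) := pow_one _
      rw [h1]; exact ⟨c • e, rfl⟩
    refine ⟨⟨ExteriorAlgebra.ι R (c • e), hmem⟩, ?_⟩
    apply Subtype.ext
    rw [d_agree R E t d hd 0]
    simp only [CliffordAlgebra.contractLeft_ι]
    simp [he, hc]
  · intro n
    apply le_antisymm
    · -- d ∘ d = 0
      rintro _ ⟨x, rfl⟩
      have : ((d n (d (n+1) x) : ⋀[R]^n E) : ExteriorAlgebra R E) = 0 := by
        rw [d_agree R E t d hd n, d_agree R E t d hd (n+1),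
          CliffordAlgebra.contractLeft_contractLeft]
      exact LinearMap.mem_ker.mpr (Subtype.ext this)
    · -- exactness
      intro x hx
      have hx0 : ((d n x : ⋀[R]^n E) : ExteriorAlgebra R E) = 0 := by
        rw [LinearMap.mem_ker.mp hx]; rfl
      have hmem : ExteriorAlgebra.ι R e * (x : ExteriorAlgebra R E) ∈ ⋀[R]^(n+2) E := by
        have h1 : (⋀[R]^(n+2) E) =
            LinearMap.range (ExteriorAlgebra.ι R (M := E)) * ⋀[R]^(n+1) E := pow_succ' _ _
        rw [h1]
        exact Submodule.mul_mem_mul ⟨e, rfl⟩ x.2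
      refine ⟨⟨ExteriorAlgebra.ι R e * (x : ExteriorAlgebra R E), hmem⟩, ?_⟩
      apply Subtype.ext
      rw [d_agree R E t d hd (n+1)]
      show CliffordAlgebra.contractLeft (Q := (0 : QuadraticForm R E)) t
        (ExteriorAlgebra.ι R e * (x : ExteriorAlgebra R E)) = _
      rw [CliffordAlgebra.contractLeft_ι_mul, ← d_agree R E t d hd n, hx0, he]
      simp
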